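/- Let A be a symmetric positive-definite 3×3 real matrix, S := A⁻¹J(A−I), and let m, m̃, M̃ be the associated symbols. Let φ₀ : ℝ³ → ℂ³ be a Schwartz function with Fourier transform φ̂₀. Define Φ(x,t) := ∫_{ℝ³} M̃(t;ξ) φ̂₀(ξ) e^{2πi ξ·x} dξ. Then Φ(x,0) = φ₀(x) for all x, and for every (x,t) ∈ ℝ³ × ℝ the map t ↦ Φ(x,t) is differentiable with ∂ₜΦ(x,t) = ∫_{ℝ³} m̃(t;ξ) M̃(t;ξ) φ̂₀(ξ) e^{2πi ξ·x} dξ. (This is the Lagrangian form of the linearised semi-geostrophic equation.) -/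

import Mathlib

open Matrix MeasureTheory Real

/-- The Coriolis-type matrix `J`. -/
noncomputable def Jmat : Matrix (Fin 3) (Fin 3) ℝ := !![0, -1, 0; 1, 0, 0; 0, 0, 0]

/-- The matrix `S := A⁻¹ J (A − I)`. -/
noncomputable def Smat (A : Matrix (Fin 3) (Fin 3) ℝ) : Matrix (Fin 3) (Fin 3) ℝ :=
  A⁻¹ * Jmat * (A - 1)

/-- The symbol `m(x) = 2 (x · A⁻¹Jx)/(x · A⁻¹x)` (equal to `0` at `x = 0`). -/
noncomputable def symb (A : Matrix (Fin 3) (Fin 3) ℝ) (x : Fin 3 → ℝ) : ℝ :=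
  2 * (x ⬝ᵥ (A⁻¹ * Jmat) *ᵥ x) / (x ⬝ᵥ A⁻¹ *ᵥ x)

/-- The time-dependent symbol `m̃(t;ξ) := m(e^{−tSᵀ}ξ)`. -/
noncomputable def symbT (A : Matrix (Fin 3) (Fin 3) ℝ) (t : ℝ) (ξ : Fin 3 → ℝ) : ℝ :=
  symb A (NormedSpace.exp ((-t) • (Smat A)ᵀ) *ᵥ ξ)

/-- The symbol `M̃(t;ξ) := exp(∫₀ᵗ m̃(r;ξ) dr)`. -/
noncomputable def symbM (A : Matrix (Fin 3) (Fin 3) ℝ) (t : ℝ) (ξ : Fin 3 → ℝ) : ℝ :=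
  Real.exp (∫ r in (0:ℝ)..t, symbT A r ξ)

/-- The Fourier transform `φ̂(ξ) := ∫ φ(x) e^{−2πi ξ·x} dx` of a vector-valued function. -/
noncomputable def fourierT (φ : (Fin 3 → ℝ) → Fin 3 → ℂ) (ξ : Fin 3 → ℝ) : Fin 3 → ℂ :=
  ∫ x : Fin 3 → ℝ, Complex.exp (-(2 * π * Complex.I * (ξ ⬝ᵥ x))) • φ x

/-- The Lagrangian solution `Φ(x,t) := ∫ M̃(t;ξ) φ̂₀(ξ) e^{2πi ξ·x} dξ`. -/
noncomputable def PhiL (A : Matrix (Fin 3) (Fin 3) ℝ) (φ₀ : SchwartzMap (Fin 3 → ℝ) (Fin 3 → ℂ))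
    (x : Fin 3 → ℝ) (t : ℝ) : Fin 3 → ℂ :=
  ∫ ξ : Fin 3 → ℝ,
    ((symbM A t ξ : ℂ) * Complex.exp (2 * π * Complex.I * (ξ ⬝ᵥ x))) • fourierT (fun y => φ₀ y) ξ

/- ### Auxiliary lemmas -/

open scoped FourierTransform RealInnerProductSpace

attribute [local instance] Matrix.linftyOpNormedAddCommGroup Matrix.linftyOpNormedRing
  Matrix.linftyOpNormedAlgebra

lemma symb_zero (A : Matrix (Fin 3) (Fin 3) ℝ) : symb A 0 = 0 := by
  simp [symb]

lemma symb_smul (A : Matrix (Fin 3) (Fin 3) ℝ) {c : ℝ} (hc : c ≠ 0) (x : Fin 3 → ℝ) :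
    symb A (c • x) = symb A x := by
  unfold symb
  rw [Matrix.mulVec_smul, Matrix.mulVec_smul, smul_dotProduct, smul_dotProduct,
    dotProduct_smul, dotProduct_smul]
  simp only [smul_eq_mul]
  rw [show 2 * (c * (c * (x ⬝ᵥ (A⁻¹ * Jmat) *ᵥ x))) = (c * c) * (2 * (x ⬝ᵥ (A⁻¹ * Jmat) *ᵥ x)) by
      ring,
    show c * (c * (x ⬝ᵥ A⁻¹ *ᵥ x)) = (c * c) * (x ⬝ᵥ A⁻¹ *ᵥ x) by ring,
    mul_div_mul_left _ _ (mul_ne_zero hc hc)]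

lemma continuous_quad (M : Matrix (Fin 3) (Fin 3) ℝ) :
    Continuous fun x : Fin 3 → ℝ => x ⬝ᵥ M *ᵥ x :=
  continuous_id.dotProduct (continuous_const.matrix_mulVec continuous_id)

lemma denom_pos {A : Matrix (Fin 3) (Fin 3) ℝ} (hApd : A.PosDef) {x : Fin 3 → ℝ} (hx : x ≠ 0) :
    0 < x ⬝ᵥ A⁻¹ *ᵥ x := by
  have := (hApd.inv).dotProduct_mulVec_pos hx
  simpa using this

lemma continuousAt_symb {A : Matrix (Fin 3) (Fin 3) ℝ} (hApd : A.PosDef) {x : Fin 3 → ℝ}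
    (hx : x ≠ 0) : ContinuousAt (symb A) x := by
  have h1 : ContinuousAt (fun x : Fin 3 → ℝ => 2 * (x ⬝ᵥ (A⁻¹ * Jmat) *ᵥ x)) x :=
    (continuous_const.mul (continuous_quad _)).continuousAt
  have h2 : ContinuousAt (fun x : Fin 3 → ℝ => x ⬝ᵥ A⁻¹ *ᵥ x) x :=
    (continuous_quad _).continuousAt
  exact h1.div h2 (denom_pos hApd hx).ne'

lemma symb_bound {A : Matrix (Fin 3) (Fin 3) ℝ} (hApd : A.PosDef) :
    ∃ C : ℝ, 0 ≤ C ∧ ∀ x, |symb A x| ≤ C := by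
  obtain ⟨C, hC⟩ := (isCompact_sphere (0 : Fin 3 → ℝ) 1).exists_bound_of_continuousOn
    (fun x hx => (continuousAt_symb hApd (by
      intro h; rw [h] at hx; simp at hx)).continuousWithinAt)
  refine ⟨max C 0, le_max_right _ _, fun x => ?_⟩
  rcases eq_or_ne x 0 with rfl | hx
  · simp [symb_zero]
  · have hnx : ‖x‖ ≠ 0 := norm_ne_zero_iff.mpr hx
    have h1 : ‖x‖⁻¹ • x ∈ Metric.sphere (0 : Fin 3 → ℝ) 1 := by
      simp [norm_smul, abs_of_nonneg (inv_nonneg.2 (norm_nonneg x)), inv_mul_cancel₀ hnx]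
    have := hC _ h1
    rw [symb_smul A (inv_ne_zero hnx) x] at this
    exact le_trans this (le_max_left _ _)

lemma continuous_expMat (M : Matrix (Fin 3) (Fin 3) ℝ) :
    Continuous fun r : ℝ => NormedSpace.exp ((-r) • M) :=
  NormedSpace.exp_continuous.comp ((continuous_neg.comp continuous_id).smul continuous_const)

lemma expMat_mulVec_ne_zero (M : Matrix (Fin 3) (Fin 3) ℝ) {ξ : Fin 3 → ℝ} (hξ : ξ ≠ 0) (r : ℝ) :
    NormedSpace.exp ((-r) • M) *ᵥ ξ ≠ 0 := by
  intro h
  have hcomm : Commute (r • M) ((-r) • M) := by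
    simp [Commute, SemiconjBy, smul_mul_smul_comm, mul_comm]
  have hmul : NormedSpace.exp (r • M) * NormedSpace.exp ((-r) • M) = 1 := by
    rw [← Matrix.exp_add_of_commute _ _ hcomm]
    simp [← add_smul]
  apply hξ
  calc ξ = (NormedSpace.exp (r • M) * NormedSpace.exp ((-r) • M)) *ᵥ ξ := by
        rw [hmul, Matrix.one_mulVec]
    _ = NormedSpace.exp (r • M) *ᵥ (NormedSpace.exp ((-r) • M) *ᵥ ξ) := by
        rw [Matrix.mulVec_mulVec]
    _ = 0 := by rw [h, Matrix.mulVec_zero]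

lemma continuous_symbT_t {A : Matrix (Fin 3) (Fin 3) ℝ} (hApd : A.PosDef) (ξ : Fin 3 → ℝ) :
    Continuous fun r => symbT A r ξ := by
  rcases eq_or_ne ξ 0 with rfl | hξ
  · have : (fun r => symbT A r 0) = fun _ => (0 : ℝ) := by
      funext r; simp [symbT, Matrix.mulVec_zero, symb_zero]
    rw [this]; exact continuous_const
  · have hvec : Continuous fun r : ℝ => NormedSpace.exp ((-r) • (Smat A)ᵀ) *ᵥ ξ :=
      (continuous_expMat _).matrix_mulVec continuous_const
    refine continuous_iff_continuousAt.mpr fun r => ?_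
    have : ContinuousAt ((symb A) ∘ fun r : ℝ => NormedSpace.exp ((-r) • (Smat A)ᵀ) *ᵥ ξ) r :=
      ContinuousAt.comp (x := r) (continuousAt_symb hApd (expMat_mulVec_ne_zero _ hξ r))
        hvec.continuousAt
    exact this

lemma continuousAt_symbT_xi {A : Matrix (Fin 3) (Fin 3) ℝ} (hApd : A.PosDef) (r : ℝ)
    {ξ : Fin 3 → ℝ} (hξ : ξ ≠ 0) : ContinuousAt (fun ξ => symbT A r ξ) ξ := by
  have hvec : Continuous fun ξ : Fin 3 → ℝ => NormedSpace.exp ((-r) • (Smat A)ᵀ) *ᵥ ξ :=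
    continuous_const.matrix_mulVec continuous_id
  have : ContinuousAt ((symb A) ∘ fun ξ => NormedSpace.exp ((-r) • (Smat A)ᵀ) *ᵥ ξ) ξ :=
    ContinuousAt.comp (x := ξ) (continuousAt_symb hApd (expMat_mulVec_ne_zero _ hξ r))
      hvec.continuousAt
  exact this

lemma hasDerivAt_symbM {A : Matrix (Fin 3) (Fin 3) ℝ} (hApd : A.PosDef) (ξ : Fin 3 → ℝ) (t : ℝ) :
    HasDerivAt (fun s => symbM A s ξ) (symbT A t ξ * symbM A t ξ) t := by
  have hc := continuous_symbT_t hApd ξ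
  have h1 : HasDerivAt (fun s => ∫ r in (0:ℝ)..s, symbT A r ξ) (symbT A t ξ) t :=
    intervalIntegral.integral_hasDerivAt_right (hc.intervalIntegrable 0 t)
      hc.aestronglyMeasurable.stronglyMeasurableAtFilter hc.continuousAt
  have := h1.exp
  simpa [symbM, mul_comm] using this

lemma symbM_pos (A : Matrix (Fin 3) (Fin 3) ℝ) (t : ℝ) (ξ : Fin 3 → ℝ) : 0 < symbM A t ξ :=
  Real.exp_pos _

lemma symbM_le {A : Matrix (Fin 3) (Fin 3) ℝ} {C : ℝ}
    (hC : ∀ r (ξ : Fin 3 → ℝ), |symbT A r ξ| ≤ C) (t : ℝ) (ξ : Fin 3 → ℝ) :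
    symbM A t ξ ≤ Real.exp (C * |t|) := by
  have hb' := intervalIntegral.norm_integral_le_of_norm_le_const
    (f := fun r => symbT A r ξ) (C := C) (a := 0) (b := t) (fun r _ => by
      simpa [Real.norm_eq_abs] using hC r ξ)
  have hb : |∫ r in (0:ℝ)..t, symbT A r ξ| ≤ C * |t| := by
    simpa [Real.norm_eq_abs, sub_zero] using hb'
  exact Real.exp_le_exp.mpr (le_trans (le_abs_self _) hb)

lemma symbT_bound {A : Matrix (Fin 3) (Fin 3) ℝ} (hApd : A.PosDef) :
    ∃ C : ℝ, 0 ≤ C ∧ ∀ r (ξ : Fin 3 → ℝ), |symbT A r ξ| ≤ C := by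
  obtain ⟨C, hC0, hC⟩ := symb_bound hApd
  exact ⟨C, hC0, fun r ξ => hC _⟩

lemma continuousAt_symbM {A : Matrix (Fin 3) (Fin 3) ℝ} (hApd : A.PosDef) (t : ℝ)
    {ξ : Fin 3 → ℝ} (hξ : ξ ≠ 0) : ContinuousAt (fun ξ => symbM A t ξ) ξ := by
  obtain ⟨C, hC0, hC⟩ := symbT_bound hApd
  have hI : ContinuousAt (fun ξ => ∫ r in (0:ℝ)..t, symbT A r ξ) ξ := by
    apply intervalIntegral.continuousAt_of_dominated_interval (bound := fun _ => C)
    · exact Filter.Eventually.of_forall fun ξ' =>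
        ((continuous_symbT_t hApd ξ').aestronglyMeasurable).restrict
    · exact Filter.Eventually.of_forall fun ξ' =>
        Filter.Eventually.of_forall fun r _ => by simpa [Real.norm_eq_abs] using hC r ξ'
    · exact intervalIntegrable_const
    · exact Filter.Eventually.of_forall fun r _ => continuousAt_symbT_xi hApd r hξ
  exact (Real.continuous_exp.continuousAt).comp hI

lemma aesm_of_continuousAt_ne_zero {f : (Fin 3 → ℝ) → ℝ}
    (hf : ∀ ξ : Fin 3 → ℝ, ξ ≠ 0 → ContinuousAt f ξ) :
    AEStronglyMeasurable f (volume : Measure (Fin 3 → ℝ)) := by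
  have hs : MeasurableSet ({0}ᶜ : Set (Fin 3 → ℝ)) := (isClosed_singleton).measurableSet.compl
  have hcont : ContinuousOn f ({0}ᶜ : Set (Fin 3 → ℝ)) := fun x hx =>
    (hf x hx).continuousWithinAt
  have h1 : AEStronglyMeasurable f (volume.restrict ({0}ᶜ : Set (Fin 3 → ℝ))) :=
    hcont.aestronglyMeasurable hs
  have h2 : (volume : Measure (Fin 3 → ℝ)).restrict ({0}ᶜ : Set (Fin 3 → ℝ)) = volume := by
    apply Measure.restrict_eq_self_of_ae_mem
    rw [MeasureTheory.ae_iff]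
    simpa using (measure_singleton (0 : Fin 3 → ℝ))
  rwa [h2] at h1

/- ### Fourier-analytic lemmas -/

abbrev E3 := EuclideanSpace ℝ (Fin 3)

lemma inner_eq_dot (ξ x : Fin 3 → ℝ) :
    (inner (𝕜 := ℝ) (E := E3) (WithLp.toLp 2 ξ) (WithLp.toLp 2 x)) = ξ ⬝ᵥ x := by
  simp [PiLp.inner_apply, RCLike.inner_apply, dotProduct, mul_comm]

lemma integral_euc {G : Type*} [NormedAddCommGroup G] [NormedSpace ℝ G]
    (f : (Fin 3 → ℝ) → G) :
    ∫ x : E3, f x = ∫ x : Fin 3 → ℝ, f x :=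
  (EuclideanSpace.volume_preserving_symm_measurableEquiv_toLp (Fin 3)).integral_comp' f

lemma integrable_euc {G : Type*} [NormedAddCommGroup G] (f : (Fin 3 → ℝ) → G) :
    Integrable (fun x : E3 => f x) (volume : Measure E3) ↔
      Integrable f (volume : Measure (Fin 3 → ℝ)) :=
  (EuclideanSpace.volume_preserving_symm_measurableEquiv_toLp (Fin 3)).integrable_comp_emb
    (MeasurableEquiv.toLp 2 (Fin 3 → ℝ)).symm.measurableEmbedding

/-- `φ₀` viewed as a Schwartz function on `E3`. -/
noncomputable def phiE (φ₀ : SchwartzMap (Fin 3 → ℝ) (Fin 3 → ℂ)) :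
    SchwartzMap E3 (Fin 3 → ℂ) :=
  SchwartzMap.compCLMOfContinuousLinearEquiv ℝ (EuclideanSpace.equiv (Fin 3) ℝ) φ₀

/-- The Fourier transform of `φ₀` as a Schwartz function on `E3`. -/
noncomputable def psiE (φ₀ : SchwartzMap (Fin 3 → ℝ) (Fin 3 → ℂ)) :
    SchwartzMap E3 (Fin 3 → ℂ) :=
  SchwartzMap.fourierTransformCLM ℝ (phiE φ₀)

lemma fourierT_eq (φ₀ : SchwartzMap (Fin 3 → ℝ) (Fin 3 → ℂ)) (ξ : Fin 3 → ℝ) :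
    fourierT (fun y => φ₀ y) ξ = psiE φ₀ (WithLp.toLp 2 ξ) := by
  have h1 : psiE φ₀ (WithLp.toLp 2 ξ) = 𝓕 (⇑(phiE φ₀)) (WithLp.toLp 2 ξ) := by
    rw [psiE, SchwartzMap.fourierTransformCLM_apply]; rfl
  rw [h1, Real.fourier_eq', fourierT]
  rw [← integral_euc (fun x : Fin 3 → ℝ => Complex.exp (-(2 * π * Complex.I * (ξ ⬝ᵥ x))) • φ₀ x)]
  congr 1
  funext v
  have hv : (phiE φ₀) v = φ₀ v := rfl
  rw [hv]
  congr 1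
  rw [inner_eq_dot v ξ]
  push_cast
  ring_nf
  rw [dotProduct_comm]

lemma phi_zero (φ₀ : SchwartzMap (Fin 3 → ℝ) (Fin 3 → ℂ)) (x : Fin 3 → ℝ) :
    (∫ ξ : Fin 3 → ℝ, Complex.exp (2 * π * Complex.I * (ξ ⬝ᵥ x)) • fourierT (fun y => φ₀ y) ξ)
      = φ₀ x := by
  have key : 𝓕⁻ (𝓕 ⇑(phiE φ₀)) (WithLp.toLp 2 x) = (phiE φ₀) (WithLp.toLp 2 x) := by
    apply MeasureTheory.Integrable.fourierInv_fourier_eq (phiE φ₀).integrable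
    · have : 𝓕 ⇑(phiE φ₀) = ⇑(psiE φ₀) := by
        rw [psiE, SchwartzMap.fourierTransformCLM_apply]; rfl
      rw [this]; exact (psiE φ₀).integrable
    · exact (phiE φ₀).continuous.continuousAt
  have hfe : (phiE φ₀) (WithLp.toLp 2 x) = φ₀ x := rfl
  rw [hfe] at key
  rw [← key, Real.fourierInv_eq']
  rw [← integral_euc (fun ξ : Fin 3 → ℝ =>
    Complex.exp (2 * π * Complex.I * (ξ ⬝ᵥ x)) • fourierT (fun y => φ₀ y) ξ)]
  congr 1
  funext v
  rw [fourierT_eq]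
  have : ⇑(psiE φ₀) = 𝓕 ⇑(phiE φ₀) := by rw [psiE, SchwartzMap.fourierTransformCLM_apply]; rfl
  rw [this]
  congr 1
  rw [inner_eq_dot v x]
  push_cast
  ring_nf

lemma norm_exp_dot (ξ x : Fin 3 → ℝ) : ‖Complex.exp (2 * π * Complex.I * (ξ ⬝ᵥ x))‖ = 1 := by
  rw [Complex.norm_exp]
  have : (2 * π * Complex.I * (ξ ⬝ᵥ x)).re = 0 := by simp
  rw [this, Real.exp_zero]

lemma symbM_zero (A : Matrix (Fin 3) (Fin 3) ℝ) (ξ : Fin 3 → ℝ) : symbM A 0 ξ = 1 := by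
  simp [symbM]

/-- `Φ(x,0) = φ₀(x)` and `∂ₜΦ(x,t) = ∫ m̃(t;ξ) M̃(t;ξ) φ̂₀(ξ) e^{2πi ξ·x} dξ`:
the Lagrangian form of the linearised semi-geostrophic equation. -/
theorem lagrangian_LSG (A : Matrix (Fin 3) (Fin 3) ℝ) (hApd : A.PosDef)
    (φ₀ : SchwartzMap (Fin 3 → ℝ) (Fin 3 → ℂ)) :
    (∀ x : Fin 3 → ℝ, PhiL A φ₀ x 0 = φ₀ x) ∧
      ∀ x : Fin 3 → ℝ, ∀ t : ℝ,
        HasDerivAt (fun s => PhiL A φ₀ x s)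
          (∫ ξ : Fin 3 → ℝ,
            ((symbT A t ξ * symbM A t ξ : ℝ) *
              Complex.exp (2 * π * Complex.I * (ξ ⬝ᵥ x))) • fourierT (fun y => φ₀ y) ξ) t := by
  obtain ⟨C, hC0, hC⟩ := symbT_bound hApd
  have hg_eq : (fun ξ : Fin 3 → ℝ => fourierT (fun y => φ₀ y) ξ)
      = fun ξ : Fin 3 → ℝ => psiE φ₀ (WithLp.toLp 2 ξ) := funext (fourierT_eq φ₀)
  have hg_cont : Continuous fun ξ : Fin 3 → ℝ => fourierT (fun y => φ₀ y) ξ := by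
    rw [hg_eq]
    exact (psiE φ₀).continuous.comp (EuclideanSpace.equiv (Fin 3) ℝ).symm.continuous
  have hg_int : Integrable (fun ξ : Fin 3 → ℝ => fourierT (fun y => φ₀ y) ξ)
      (volume : Measure (Fin 3 → ℝ)) := by
    rw [hg_eq]
    exact (integrable_euc _).mp (psiE φ₀).integrable
  constructor
  · intro x
    have h1 : PhiL A φ₀ x 0 = ∫ ξ : Fin 3 → ℝ,
        Complex.exp (2 * π * Complex.I * (ξ ⬝ᵥ x)) • fourierT (fun y => φ₀ y) ξ := by
      unfold PhiL
      congr 1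
      funext ξ
      rw [symbM_zero]
      norm_num
    rw [h1, phi_zero]
  · intro x t
    have hexp_cont : Continuous fun ξ : Fin 3 → ℝ =>
        Complex.exp (2 * π * Complex.I * (ξ ⬝ᵥ x)) := by
      apply Complex.continuous_exp.comp
      exact continuous_const.mul
        (Complex.continuous_ofReal.comp (continuous_id.dotProduct continuous_const))
    have hnorm : ∀ (r : ℝ) (ξ : Fin 3 → ℝ) (v : Fin 3 → ℂ),
        ‖((r : ℂ) * Complex.exp (2 * π * Complex.I * (ξ ⬝ᵥ x))) • v‖ = |r| * ‖v‖ := by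
      intro r ξ v
      rw [norm_smul, norm_mul, norm_exp_dot, Complex.norm_real, Real.norm_eq_abs, mul_one]
    have haesm : ∀ s : ℝ, AEStronglyMeasurable
        (fun ξ : Fin 3 → ℝ => ((symbM A s ξ : ℂ) *
          Complex.exp (2 * π * Complex.I * (ξ ⬝ᵥ x))) • fourierT (fun y => φ₀ y) ξ)
        (volume : Measure (Fin 3 → ℝ)) := by
      intro s
      have h1 : AEStronglyMeasurable (fun ξ : Fin 3 → ℝ => symbM A s ξ)
          (volume : Measure (Fin 3 → ℝ)) :=
        aesm_of_continuousAt_ne_zero fun ξ hξ => continuousAt_symbM hApd s hξ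
      exact (((Complex.continuous_ofReal.comp_aestronglyMeasurable h1).mul
        hexp_cont.aestronglyMeasurable).smul hg_cont.aestronglyMeasurable)
    have haesm' : AEStronglyMeasurable
        (fun ξ : Fin 3 → ℝ => (((symbT A t ξ * symbM A t ξ : ℝ) : ℂ) *
          Complex.exp (2 * π * Complex.I * (ξ ⬝ᵥ x))) • fourierT (fun y => φ₀ y) ξ)
        (volume : Measure (Fin 3 → ℝ)) := by
      have h1 : AEStronglyMeasurable (fun ξ : Fin 3 → ℝ => symbT A t ξ * symbM A t ξ)
          (volume : Measure (Fin 3 → ℝ)) :=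
        aesm_of_continuousAt_ne_zero fun ξ hξ =>
          (continuousAt_symbT_xi hApd t hξ).mul (continuousAt_symbM hApd t hξ)
      exact (((Complex.continuous_ofReal.comp_aestronglyMeasurable h1).mul
        hexp_cont.aestronglyMeasurable).smul hg_cont.aestronglyMeasurable)
    have main := hasDerivAt_integral_of_dominated_loc_of_deriv_le
      (μ := (volume : Measure (Fin 3 → ℝ))) (x₀ := t) (s := Metric.ball t 1) (Metric.ball_mem_nhds t one_pos)
      (F := fun s ξ => ((symbM A s ξ : ℂ) *
        Complex.exp (2 * π * Complex.I * (ξ ⬝ᵥ x))) • fourierT (fun y => φ₀ y) ξ)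
      (F' := fun s ξ => (((symbT A s ξ * symbM A s ξ : ℝ) : ℂ) *
        Complex.exp (2 * π * Complex.I * (ξ ⬝ᵥ x))) • fourierT (fun y => φ₀ y) ξ)
      (bound := fun ξ => (C * Real.exp (C * (|t| + 1))) * ‖fourierT (fun y => φ₀ y) ξ‖)
      (Filter.Eventually.of_forall haesm)
      (by
        apply (hg_int.norm.const_mul (Real.exp (C * |t|))).mono' (haesm t)
        refine Filter.Eventually.of_forall fun ξ => ?_
        rw [hnorm]
        have h1 : |symbM A t ξ| ≤ Real.exp (C * |t|) := by
          rw [abs_of_pos (symbM_pos A t ξ)]; exact symbM_le hC t ξ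
        exact mul_le_mul_of_nonneg_right h1 (norm_nonneg _))
      haesm'
      (Filter.Eventually.of_forall fun ξ => fun s hs => by
        rw [hnorm]
        have hst : |s| ≤ |t| + 1 := by
          have := le_of_lt (Metric.mem_ball.mp hs)
          calc |s| = |t + (s - t)| := by ring_nf
            _ ≤ |t| + |s - t| := abs_add_le _ _
            _ ≤ |t| + 1 := by
                have : |s - t| ≤ 1 := by simpa [Real.dist_eq] using this
                linarith
        have h1 : |symbT A s ξ * symbM A s ξ| ≤ C * Real.exp (C * (|t| + 1)) := by
          rw [abs_mul]
          have h2 : |symbM A s ξ| ≤ Real.exp (C * (|t| + 1)) := by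
            rw [abs_of_pos (symbM_pos A s ξ)]
            exact le_trans (symbM_le hC s ξ)
              (Real.exp_le_exp.mpr (mul_le_mul_of_nonneg_left hst hC0))
          exact mul_le_mul (hC s ξ) h2 (abs_nonneg _) hC0
        exact mul_le_mul_of_nonneg_right h1 (norm_nonneg _))
      ((hg_int.norm.const_mul _))
      (Filter.Eventually.of_forall fun ξ => fun s _ => by
        have hd := (hasDerivAt_symbM hApd ξ s).ofReal_comp
        exact (hd.mul_const (Complex.exp (2 * π * Complex.I * (ξ ⬝ᵥ x)))).smul_const
          (fourierT (fun y => φ₀ y) ξ))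
    exact main.2
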